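/- Let n ≥ 2, let h : ℝ^n → ℝ be twice continuously differentiable on an open set containing Δ_n° with Hessian positive definite on Δ_n°, and let M := {P_H ∇h(x) : x ∈ Δ_n°}. Let A ∈ ℝ^{n×m} and suppose there is no u₀ ∈ Δ_m° with A u₀ ∈ span{𝟙}. Then for every z₀ ∈ M there exists z₁ ∈ M such that for no T ≥ 0 and no integrable control u : [0,T] → Δ_m does z₀ + ∫₀ᵀ P_H A u(s) ds = z₁. -/

import Mathlib

open Matrix MeasureTheory

noncomputable section

/-- The standard probability simplex in `ℝ^n`. -/
def simplex (n : ℕ) : Set (Fin n → ℝ) := {x | (∀ i, 0 ≤ x i) ∧ ∑ i, x i = 1}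

/-- The relative interior of the standard probability simplex. -/
def simplexInt (n : ℕ) : Set (Fin n → ℝ) := {x | (∀ i, 0 < x i) ∧ ∑ i, x i = 1}

/-- The all-ones vector `𝟙`. -/
def ones (n : ℕ) : Fin n → ℝ := fun _ => 1

/-- The orthogonal projection matrix `P_H = I - (1/n) 𝟙 𝟙ᵀ` onto `H = {z : ∑ i, z i = 0}`. -/
def PH (n : ℕ) : Matrix (Fin n) (Fin n) ℝ :=
  1 - (n : ℝ)⁻¹ • Matrix.of fun _ _ => (1 : ℝ)

/-- The gradient (vector of partial derivatives) of `h`. -/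
def grad {n : ℕ} (h : (Fin n → ℝ) → ℝ) (x : Fin n → ℝ) : Fin n → ℝ :=
  fun i => fderiv ℝ h x (Pi.single i 1)

/-- The Hessian matrix of `h`. -/
def hess {n : ℕ} (h : (Fin n → ℝ) → ℝ) (x : Fin n → ℝ) : Matrix (Fin n) (Fin n) ℝ :=
  Matrix.of fun i j =>
    fderiv ℝ (fun y => fderiv ℝ h y (Pi.single j 1)) x (Pi.single i 1)

lemma PH_mulVec {n : ℕ} (v : Fin n → ℝ) :
    PH n *ᵥ v = fun i => v i - (∑ j, v j) / n := by
  funext i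
  simp only [PH, sub_mulVec, mulVec, dotProduct, one_apply, Matrix.smul_apply, Matrix.smul_apply,
    Pi.sub_apply]
  simp [Matrix.one_apply, sub_mul, Finset.sum_sub_distrib, Finset.sum_ite_eq, ← Finset.mul_sum,
    div_eq_inv_mul]

lemma sum_PH {n : ℕ} (hn : (n : ℝ) ≠ 0) (v : Fin n → ℝ) :
    ∑ i, (PH n *ᵥ v) i = 0 := by
  rw [PH_mulVec]
  rw [Finset.sum_sub_distrib, Finset.sum_const]
  simp [Finset.card_univ]
  field_simp
  ring

lemma dot_PH {n : ℕ} (c v : Fin n → ℝ) (hc : ∑ i, c i = 0) :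
    c ⬝ᵥ (PH n *ᵥ v) = c ⬝ᵥ v := by
  rw [PH_mulVec]
  simp only [dotProduct, mul_sub]
  rw [Finset.sum_sub_distrib, ← Finset.sum_mul, hc]
  ring

lemma PH_eq_zero_iff {n : ℕ} (hn : (n : ℝ) ≠ 0) (v : Fin n → ℝ) :
    PH n *ᵥ v = 0 ↔ v ∈ Submodule.span ℝ {ones n} := by
  rw [Submodule.mem_span_singleton, PH_mulVec]
  constructor
  · intro h
    refine ⟨(∑ j, v j) / n, ?_⟩
    funext i
    have := congrFun h i
    simp [ones] at this ⊢
    linarith [this]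
  · rintro ⟨t, rfl⟩
    funext i
    simp only [Pi.smul_apply, ones, smul_eq_mul, mul_one, Finset.sum_const,
      Finset.card_univ, Fintype.card_fin, nsmul_eq_mul, Pi.zero_apply]
    field_simp
    ring

lemma eq_sum_single {n : ℕ} (y : Fin n → ℝ) :
    y = ∑ i, y i • (Pi.single i 1 : Fin n → ℝ) := by
  funext j
  rw [Finset.sum_apply]
  simp [Pi.single_apply]

lemma clm_eq_dot {n : ℕ} (f : (Fin n → ℝ) →L[ℝ] ℝ) (y : Fin n → ℝ) :
    f y = (fun i => f (Pi.single i 1)) ⬝ᵥ y := by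
  conv_lhs => rw [eq_sum_single y]
  rw [map_sum]
  simp [dotProduct, mul_comm]

lemma dot_le_norm {n : ℕ} (c x : Fin n → ℝ) : c ⬝ᵥ x ≤ n * (‖c‖ * ‖x‖) := by
  calc c ⬝ᵥ x ≤ ∑ i, |c i * x i| := Finset.sum_le_sum fun i _ => le_abs_self _
    _ ≤ ∑ _i : Fin n, ‖c‖ * ‖x‖ := by
        refine Finset.sum_le_sum fun i _ => ?_
        rw [abs_mul]
        exact mul_le_mul (by simpa using norm_le_pi_norm c i)
          (by simpa using norm_le_pi_norm x i) (abs_nonneg _) (norm_nonneg _)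
    _ = n * (‖c‖ * ‖x‖) := by simp [Finset.sum_const, Finset.card_univ, nsmul_eq_mul]

lemma sep {n m : ℕ} (hn : 2 ≤ n) (hm : 0 < m) (A : Matrix (Fin n) (Fin m) ℝ)
    (hno : ¬ ∃ u₀ ∈ simplexInt m, A *ᵥ u₀ ∈ Submodule.span ℝ {ones n}) :
    ∃ c : Fin n → ℝ, ‖c‖ = 1 ∧ (∑ i, c i = 0) ∧
      ∀ u ∈ simplex m, c ⬝ᵥ (PH n *ᵥ (A *ᵥ u)) ≤ 0 := by
  have hnR : (n : ℝ) ≠ 0 := by positivity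
  have hmR : (0 : ℝ) < m := by exact_mod_cast hm
  set L : (Fin m → ℝ) →ₗ[ℝ] (Fin n → ℝ) := Matrix.mulVecLin (PH n * A) with hLdef
  have hL : ∀ u, L u = PH n *ᵥ (A *ᵥ u) := fun u => by
    simp [hLdef, Matrix.mulVecLin_apply, ← Matrix.mulVec_mulVec]
  set K : Set (Fin n → ℝ) := L '' (stdSimplex ℝ (Fin m)) with hKdef
  have hsimplex : simplex m = stdSimplex ℝ (Fin m) := rfl
  have hKcpt : IsCompact K :=
    (isCompact_stdSimplex ℝ _).image L.continuous_of_finiteDimensional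
  have hKcvx : Convex ℝ K := (convex_stdSimplex ℝ _).linear_image L
  have hKsum : ∀ k ∈ K, ∑ i, k i = 0 := by
    rintro k ⟨u, hu, rfl⟩
    rw [hL]; exact sum_PH hnR _
  set unif : Fin m → ℝ := fun _ => (m : ℝ)⁻¹ with hunifdef
  have hunif : unif ∈ stdSimplex ℝ (Fin m) := by
    constructor
    · intro i; positivity
    · simp [hunifdef, Finset.sum_const, Finset.card_univ]
      field_simp
  -- no small ball of H inside K
  have hball : ∀ δ > (0:ℝ), ∃ x : Fin n → ℝ, (∑ i, x i = 0) ∧ ‖x‖ ≤ δ ∧ x ∉ K := by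
    intro δ hδ
    by_contra hcon
    push_neg at hcon
    set β := L unif with hβdef
    have hβK : β ∈ K := ⟨unif, hunif, rfl⟩
    by_cases hβ : β = 0
    · refine hno ⟨unif, ⟨fun i => by positivity, hunif.2⟩, (PH_eq_zero_iff hnR _).mp ?_⟩
      rw [← hL]; exact hβ
    · have hβn : 0 < ‖β‖ := norm_pos_iff.mpr hβ
      set t := δ / ‖β‖ with htdef
      have ht : 0 < t := by positivity
      have hx : -(t • β) ∈ K := by
        refine hcon _ ?_ ?_
        · have := hKsum β hβK
          simp [Finset.sum_neg_distrib, ← Finset.mul_sum, this]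
        · rw [norm_neg, norm_smul, Real.norm_eq_abs, abs_of_pos ht, htdef]
          rw [div_mul_cancel₀ _ (ne_of_gt hβn)]
      obtain ⟨v, hv, hvL⟩ := hx
      have h1t : (0:ℝ) < 1 + t := by linarith
      set u := (t/(1+t)) • unif + (1/(1+t)) • v with hudef
      refine hno ⟨u, ⟨?_, ?_⟩, (PH_eq_zero_iff hnR _).mp ?_⟩
      · intro j
        have hv0 : 0 ≤ v j := hv.1 j
        have : 0 < (t/(1+t)) * (m:ℝ)⁻¹ := by positivity
        have h2 : 0 ≤ (1/(1+t)) * v j := by positivity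
        simp only [hudef, Pi.add_apply, Pi.smul_apply, smul_eq_mul, hunifdef]
        linarith
      · simp only [hudef, Finset.sum_add_distrib, Pi.add_apply, Pi.smul_apply, smul_eq_mul,
          ← Finset.mul_sum]
        rw [hv.2, hunif.2]
        field_simp
        ring
      · rw [← hL]
        have : L u = (t/(1+t)) • β + (1/(1+t)) • (L v) := by
          simp [hudef, map_add, _root_.map_smul]
          rfl
        rw [this, hvL]
        rw [smul_neg, smul_smul]
        rw [← sub_eq_add_neg, ← sub_smul]
        convert zero_smul ℝ β
        field_simp
        ring
  -- approximate separation
  have happrox : ∀ ε > (0:ℝ), ∃ c : Fin n → ℝ, ‖c‖ = 1 ∧ (∑ i, c i = 0) ∧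
      ∀ u ∈ stdSimplex ℝ (Fin m), c ⬝ᵥ (L u) ≤ ε := by
    intro ε hε
    obtain ⟨x, hxs, hxn, hxK⟩ := hball (ε/(n+1)) (by positivity)
    obtain ⟨f, w, hfK, hwx⟩ := geometric_hahn_banach_closed_point hKcvx hKcpt.isClosed hxK
    set c₀ : Fin n → ℝ := fun i => f (Pi.single i 1) with hc₀def
    set c₁ : Fin n → ℝ := fun i => c₀ i - (∑ j, c₀ j)/n with hc₁def
    have hc₁sum : ∑ i, c₁ i = 0 := by
      simp only [hc₁def, Finset.sum_sub_distrib, Finset.sum_const, Finset.card_univ,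
        Fintype.card_fin, nsmul_eq_mul]
      field_simp
      ring
    have hdot : ∀ y : Fin n → ℝ, (∑ i, y i = 0) → c₁ ⬝ᵥ y = f y := by
      intro y hy
      rw [clm_eq_dot f y]
      simp only [dotProduct, hc₁def, sub_mul, Finset.sum_sub_distrib, ← hc₀def]
      rw [← Finset.mul_sum, hy, mul_zero, sub_zero]
    have hβK : L unif ∈ K := ⟨unif, hunif, rfl⟩
    have hc₁ne : c₁ ≠ 0 := by
      intro hc
      have h1 : c₁ ⬝ᵥ (L unif) = f (L unif) := hdot _ (hKsum _ hβK)
      have h2 : c₁ ⬝ᵥ x = f x := hdot _ hxs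
      have h3 : f (L unif) < f x := lt_trans (hfK _ hβK) hwx
      rw [← h1, ← h2, hc] at h3
      simp at h3
    have hc₁pos : 0 < ‖c₁‖ := norm_pos_iff.mpr hc₁ne
    refine ⟨‖c₁‖⁻¹ • c₁, ?_, ?_, ?_⟩
    · rw [norm_smul, Real.norm_eq_abs, abs_of_pos (by positivity)]
      field_simp
    · simp only [Pi.smul_apply, smul_eq_mul, ← Finset.mul_sum, hc₁sum, mul_zero]
    · intro u hu
      have hLuK : L u ∈ K := ⟨u, hu, rfl⟩
      have h1 : c₁ ⬝ᵥ (L u) = f (L u) := hdot _ (hKsum _ hLuK)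
      have h2 : c₁ ⬝ᵥ x = f x := hdot _ hxs
      rw [smul_dotProduct, h1, smul_eq_mul]
      have hflt : f (L u) < f x := lt_trans (hfK _ hLuK) hwx
      have step1 : ‖c₁‖⁻¹ * f (L u) ≤ ‖c₁‖⁻¹ * f x := by
        apply mul_le_mul_of_nonneg_left (le_of_lt hflt) (by positivity)
      have step2 : ‖c₁‖⁻¹ * f x = (‖c₁‖⁻¹ • c₁) ⬝ᵥ x := by
        rw [smul_dotProduct, h2, smul_eq_mul]
      have step3 : (‖c₁‖⁻¹ • c₁) ⬝ᵥ x ≤ n * (‖‖c₁‖⁻¹ • c₁‖ * ‖x‖) := dot_le_norm _ _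
      have hcn : ‖‖c₁‖⁻¹ • c₁‖ = 1 := by
        rw [norm_smul, Real.norm_eq_abs, abs_of_pos (by positivity)]
        field_simp
      have step4 : (n:ℝ) * (‖‖c₁‖⁻¹ • c₁‖ * ‖x‖) ≤ ε := by
        rw [hcn, one_mul]
        calc (n:ℝ) * ‖x‖ ≤ n * (ε/(n+1)) := by
              apply mul_le_mul_of_nonneg_left hxn (by positivity)
          _ ≤ ε := by
              rw [mul_comm, div_mul_eq_mul_div, div_le_iff₀ (by positivity)]
              nlinarith [hε.le]
      linarith
  -- compactness
  have hseq : ∀ k : ℕ, ∃ c : Fin n → ℝ, ‖c‖ = 1 ∧ (∑ i, c i = 0) ∧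
      ∀ u ∈ stdSimplex ℝ (Fin m), c ⬝ᵥ (L u) ≤ 1/((k:ℝ)+1) :=
    fun k => happrox _ (by positivity)
  choose cs hcs1 hcs2 hcs3 using hseq
  obtain ⟨c, hcS, φ, hφ, htend⟩ := (isCompact_sphere (0 : Fin n → ℝ) 1).tendsto_subseq
    (fun k => mem_sphere_zero_iff_norm.mpr (hcs1 k))
  refine ⟨c, mem_sphere_zero_iff_norm.mp hcS, ?_, ?_⟩
  · have h1 : Filter.Tendsto (fun k => ∑ i, (cs ∘ φ) k i) Filter.atTop (nhds (∑ i, c i)) := by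
      apply tendsto_finset_sum
      intro i _
      exact ((continuous_apply i).tendsto c).comp htend
    have h2 : (fun k => ∑ i, (cs ∘ φ) k i) = fun _ => (0:ℝ) := by
      funext k; exact hcs2 (φ k)
    rw [h2] at h1
    exact (tendsto_nhds_unique tendsto_const_nhds h1).symm
  · intro u hu
    rw [← hL]
    have hdcont : Continuous fun c : Fin n → ℝ => c ⬝ᵥ (L u) := by
      apply continuous_finset_sum
      intro i _
      exact (continuous_apply i).mul continuous_const
    have h1 : Filter.Tendsto (fun k => (cs ∘ φ) k ⬝ᵥ (L u)) Filter.atTop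
        (nhds (c ⬝ᵥ (L u))) := (hdcont.tendsto c).comp htend
    have h2 : Filter.Tendsto (fun k : ℕ => 1/((φ k : ℝ)+1)) Filter.atTop (nhds 0) :=
      tendsto_one_div_add_atTop_nhds_zero_nat.comp hφ.tendsto_atTop
    exact le_of_tendsto_of_tendsto' h1 h2 fun k => hcs3 (φ k) u hu

lemma dot_grad {n : ℕ} (h : (Fin n → ℝ) → ℝ) (x c : Fin n → ℝ) :
    c ⬝ᵥ grad h x = fderiv ℝ h x c := by
  conv_rhs => rw [eq_sum_single c]
  rw [map_sum]
  simp [dotProduct, grad]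

lemma hasDerivAt_key {n : ℕ} (h : (Fin n → ℝ) → ℝ) (U : Set (Fin n → ℝ))
    (hU : IsOpen U) (hC2 : ContDiffOn ℝ 2 h U) (x₀ c : Fin n → ℝ) (s : ℝ)
    (hx : x₀ + s • c ∈ U) :
    HasDerivAt (fun s : ℝ => fderiv ℝ h (x₀ + s • c) c)
      (c ⬝ᵥ (hess h (x₀ + s • c) *ᵥ c)) s := by
  set x := x₀ + s • c with hxdef
  have hF : ContDiffOn ℝ 1 (fderiv ℝ h) U := hC2.fderiv_of_isOpen hU (by norm_num)
  have hFx : DifferentiableAt ℝ (fderiv ℝ h) x :=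
    ((hF.differentiableOn one_ne_zero) x hx).differentiableAt (hU.mem_nhds hx)
  set F' := fderiv ℝ (fderiv ℝ h) x with hF'def
  have hFd : HasFDerivAt (fderiv ℝ h) F' x := hFx.hasFDerivAt
  have hγ : HasDerivAt (fun s : ℝ => x₀ + s • c) c s := by
    simpa using ((hasDerivAt_id s).smul_const c).const_add x₀
  have hcomp : HasDerivAt (fun s : ℝ => fderiv ℝ h (x₀ + s • c)) (F' c) s :=
    hFd.comp_hasDerivAt s hγ
  have hentry : ∀ i j, hess h x i j = (F' (Pi.single i 1)) (Pi.single j 1) := by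
    intro i j
    have hj : HasFDerivAt (fun y => fderiv ℝ h y (Pi.single j 1))
        ((ContinuousLinearMap.apply ℝ ℝ (Pi.single j 1 : Fin n → ℝ)).comp F') x :=
      (ContinuousLinearMap.apply ℝ ℝ (Pi.single j 1 : Fin n → ℝ)).hasFDerivAt.comp x hFd
    show fderiv ℝ (fun y => fderiv ℝ h y (Pi.single j 1)) x (Pi.single i 1) = _
    rw [hj.fderiv]
    simp
  have hexp : (F' c) c = c ⬝ᵥ (hess h x *ᵥ c) := by
    have h1 : F' c = ∑ i, c i • F' (Pi.single i 1) := by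
      conv_lhs => rw [eq_sum_single c]
      rw [map_sum]
      simp
    rw [h1, ContinuousLinearMap.sum_apply]
    simp only [ContinuousLinearMap.smul_apply, smul_eq_mul]
    rw [dotProduct]
    refine Finset.sum_congr rfl fun i _ => ?_
    congr 1
    have h2 : (F' (Pi.single i 1)) c = ∑ j, c j * (F' (Pi.single i 1)) (Pi.single j 1) := by
      conv_lhs => rw [eq_sum_single c]
      rw [map_sum]
      simp
    rw [h2]
    simp only [mulVec, dotProduct]
    refine Finset.sum_congr rfl fun j _ => ?_
    rw [hentry i j, mul_comm]
  have final := (ContinuousLinearMap.apply ℝ ℝ c).hasFDerivAt.comp_hasDerivAt s hcomp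
  rw [← hexp]
  exact final

lemma grad_incr {n : ℕ} (hn : 2 ≤ n) (h : (Fin n → ℝ) → ℝ) (U : Set (Fin n → ℝ))
    (hU : IsOpen U) (hUsub : simplexInt n ⊆ U) (hC2 : ContDiffOn ℝ 2 h U)
    (hpos : ∀ x ∈ simplexInt n, ∀ v : Fin n → ℝ, v ≠ 0 → 0 < v ⬝ᵥ (hess h x *ᵥ v))
    (x₀ : Fin n → ℝ) (hx₀ : x₀ ∈ simplexInt n) (c : Fin n → ℝ)
    (hc0 : c ≠ 0) (hcsum : ∑ i, c i = 0) :
    ∃ x₁ ∈ simplexInt n, c ⬝ᵥ grad h x₀ < c ⬝ᵥ grad h x₁ := by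
  have hnpos : 0 < n := by omega
  haveI : Nonempty (Fin n) := ⟨⟨0, hnpos⟩⟩
  set δ := Finset.univ.inf' Finset.univ_nonempty (fun i => x₀ i) with hδdef
  have hδpos : 0 < δ := by
    rw [hδdef, Finset.lt_inf'_iff]
    exact fun i _ => hx₀.1 i
  have hδle : ∀ i, δ ≤ x₀ i := fun i => Finset.inf'_le _ (Finset.mem_univ i)
  set t := δ / (2 * (‖c‖ + 1)) with htdef
  have ht : 0 < t := by positivity
  have hseg : ∀ s ∈ Set.Icc (0:ℝ) t, x₀ + s • c ∈ simplexInt n := by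
    intro s hs
    constructor
    · intro i
      have h1 : |c i| ≤ ‖c‖ := by simpa [Real.norm_eq_abs] using norm_le_pi_norm c i
      have h2 : s * |c i| ≤ t * (‖c‖ + 1) := by
        apply mul_le_mul hs.2 (by linarith) (abs_nonneg _) ht.le
      have h3 : t * (‖c‖ + 1) = δ / 2 := by
        rw [htdef]; field_simp
      show 0 < x₀ i + s * c i
      have := hδle i
      nlinarith [abs_nonneg (c i), neg_abs_le (c i), hs.1]
    · show ∑ i, (x₀ i + s * c i) = 1
      rw [Finset.sum_add_distrib, ← Finset.mul_sum, hcsum, hx₀.2]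
      ring
  set g : ℝ → ℝ := fun s => fderiv ℝ h (x₀ + s • c) c with hgdef
  have hg : ∀ s ∈ Set.Icc (0:ℝ) t, HasDerivAt g (c ⬝ᵥ (hess h (x₀ + s • c) *ᵥ c)) s :=
    fun s hs => hasDerivAt_key h U hU hC2 x₀ c s (hUsub (hseg s hs))
  have hmono : StrictMonoOn g (Set.Icc 0 t) := by
    apply strictMonoOn_of_deriv_pos (convex_Icc 0 t)
    · exact fun s hs => ((hg s hs).continuousAt).continuousWithinAt
    · intro s hs
      rw [interior_Icc] at hs
      have hs' : s ∈ Set.Icc (0:ℝ) t := ⟨hs.1.le, hs.2.le⟩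
      rw [(hg s hs').deriv]
      exact hpos _ (hseg s hs') c hc0
  have hlt : g 0 < g t := hmono ⟨le_rfl, ht.le⟩ ⟨ht.le, le_rfl⟩ ht
  refine ⟨x₀ + t • c, hseg t ⟨ht.le, le_rfl⟩, ?_⟩
  rw [dot_grad, dot_grad]
  simpa [hgdef] using hlt

/-- (Necessity of condition 1) in Theorem 1 of the paper.) If there is no
fully mixed neutralizing strategy `u₀ ∈ Δ_m°` with `A u₀ ∈ span{𝟙}`, then from every
`z₀ ∈ M` some `z₁ ∈ M` is unreachable by the projected dual dynamics `ż = P_H A u`. -/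
theorem stmt9 {n m : ℕ} (hn : 2 ≤ n) (h : (Fin n → ℝ) → ℝ)
    (U : Set (Fin n → ℝ)) (hU : IsOpen U) (hUsub : simplexInt n ⊆ U)
    (hC2 : ContDiffOn ℝ 2 h U)
    (hpos : ∀ x ∈ simplexInt n, ∀ v : Fin n → ℝ, v ≠ 0 → 0 < v ⬝ᵥ (hess h x *ᵥ v))
    (A : Matrix (Fin n) (Fin m) ℝ)
    (hno : ¬ ∃ u₀ ∈ simplexInt m, A *ᵥ u₀ ∈ Submodule.span ℝ {ones n}) :
    ∀ z₀ ∈ (fun x => PH n *ᵥ grad h x) '' simplexInt n,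
      ∃ z₁ ∈ (fun x => PH n *ᵥ grad h x) '' simplexInt n,
        ∀ T : ℝ, 0 ≤ T → ∀ u : ℝ → Fin m → ℝ,
          IntervalIntegrable u volume 0 T →
          (∀ s ∈ Set.Icc (0 : ℝ) T, u s ∈ simplex m) →
          z₀ + (∫ s in (0:ℝ)..T, PH n *ᵥ (A *ᵥ u s)) ≠ z₁ := by
  intro z₀ hz₀
  obtain ⟨x₀, hx₀, hz₀eq⟩ := hz₀
  -- obtain the separating direction
  have hcex : ∃ c : Fin n → ℝ, c ≠ 0 ∧ (∑ i, c i = 0) ∧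
      ∀ v ∈ simplex m, c ⬝ᵥ (PH n *ᵥ (A *ᵥ v)) ≤ 0 := by
    rcases Nat.eq_zero_or_pos m with hm | hm
    · refine ⟨(Pi.single ⟨0, by omega⟩ 1 : Fin n → ℝ) - Pi.single ⟨1, by omega⟩ 1,
        ?_, ?_, ?_⟩
      · intro hc
        have := congrFun hc ⟨0, by omega⟩
        simp [Pi.single_apply] at this
      · simp [Pi.sub_apply, Finset.sum_sub_distrib, Pi.single_apply]
      · intro v hv
        exfalso
        have := hv.2
        subst hm
        simp at this
    · obtain ⟨c, hc1, hc2, hc3⟩ := sep hn hm A hno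
      refine ⟨c, ?_, hc2, hc3⟩
      intro h0
      rw [h0] at hc1
      simp at hc1
  obtain ⟨c, hc0, hcsum, hcle⟩ := hcex
  obtain ⟨x₁, hx₁, hlt⟩ := grad_incr hn h U hU hUsub hC2 hpos x₀ hx₀ c hc0 hcsum
  refine ⟨PH n *ᵥ grad h x₁, ⟨x₁, hx₁, rfl⟩, ?_⟩
  intro T hT u hu husimp heq
  -- the linear maps
  set L2 : (Fin m → ℝ) →L[ℝ] (Fin n → ℝ) :=
    LinearMap.toContinuousLinearMap (Matrix.mulVecLin (PH n * A)) with hL2def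
  have hL2app : ∀ v, L2 v = PH n *ᵥ (A *ᵥ v) := fun v => by
    simp [hL2def, Matrix.mulVecLin_apply, ← Matrix.mulVec_mulVec]
  set Dlin : (Fin n → ℝ) →ₗ[ℝ] ℝ :=
    { toFun := fun v => c ⬝ᵥ v
      map_add' := fun a b => dotProduct_add c a b
      map_smul' := fun r v => by simp [dotProduct_smul] } with hDlindef
  set D : (Fin n → ℝ) →L[ℝ] ℝ := LinearMap.toContinuousLinearMap Dlin with hDdef
  have hDapp : ∀ v, D v = c ⬝ᵥ v := fun v => by
    simp [hDdef, hDlindef]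
  have hint : IntervalIntegrable (fun s => L2 (u s)) volume 0 T :=
    ⟨L2.integrable_comp hu.1, L2.integrable_comp hu.2⟩
  have hcongr : (fun s => PH n *ᵥ (A *ᵥ u s)) = fun s => L2 (u s) :=
    funext fun s => (hL2app (u s)).symm
  have h1 : c ⬝ᵥ (∫ s in (0:ℝ)..T, PH n *ᵥ (A *ᵥ u s))
      = ∫ s in (0:ℝ)..T, c ⬝ᵥ (PH n *ᵥ (A *ᵥ u s)) := by
    rw [hcongr, ← hDapp, ← D.intervalIntegral_comp_comm hint]
    simp only [hDapp, hL2app]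
  have h2 : (∫ s in (0:ℝ)..T, c ⬝ᵥ (PH n *ᵥ (A *ᵥ u s))) ≤ 0 := by
    have hnn := intervalIntegral.integral_nonneg (μ := volume)
      (f := fun s => -(c ⬝ᵥ (PH n *ᵥ (A *ᵥ u s)))) hT
      (fun s hs => neg_nonneg.mpr (hcle _ (husimp s hs)))
    rw [intervalIntegral.integral_neg] at hnn
    linarith
  have heq' := congrArg (fun z => c ⬝ᵥ z) heq
  simp only [dotProduct_add] at heq'
  rw [← hz₀eq] at heq'
  simp only at heq'
  rw [dot_PH _ _ hcsum, dot_PH _ _ hcsum, h1] at heq'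
  linarith
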